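/- Uniqueness of the confirming prefix: if two sets of blocks both pass the proof-verification algorithm for the same transaction tx at position (k,l) on node u's chain with respect to the same main chain (same set of committed abstracts), then they contain identical blocks B_{u,1}, ..., B_{u,k'} for u's chain up to the confirming abstract index k'. -/

import Mathlib

/-- A block: hash of previous block plus a list of transactions. -/
structure Block (Tx : Type) where
  prevHash : ℕ
  txs : List Tx

/-- **Uniqueness of the confirming prefix.**
The main chain is a fixed map from `(node, index)` to committed hashes, and `H`
is injective.  If two chains of blocks `B, B'` for node `u` both pass the
proof-verification algorithm for the same transaction `tx` at position `(k, l)`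
— i.e. both have correct hash links up to the confirming index `k'`, the hash of
each `k'`-th block agrees with the abstract committed on the main chain at
`(u, k')`, `tx` occurs as the `l`-th transaction of the `k`-th block, and
`k ≤ k'` — then the two chains contain identical blocks `B_{u,1}, …, B_{u,k'}`. -/
theorem confirming_prefix_unique {Node Tx : Type}
    (H : Block Tx → ℕ) (hH : Function.Injective H)
    (mainChain : Node × ℕ → Option ℕ)
    (u : Node) (k k' l : ℕ) (hk : 1 ≤ k) (hkk' : k ≤ k') (tx : Tx)
    (B B' : ℕ → Block Tx)
    (hlinks : ∀ m, 1 < m → m ≤ k' → (B m).prevHash = H (B (m - 1)))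
    (hlinks' : ∀ m, 1 < m → m ≤ k' → (B' m).prevHash = H (B' (m - 1)))
    (hcommit : mainChain (u, k') = some (H (B k')))
    (hcommit' : mainChain (u, k') = some (H (B' k')))
    (htx : (B k).txs[l]? = some tx)
    (htx' : (B' k).txs[l]? = some tx) :
    ∀ m, 1 ≤ m → m ≤ k' → B m = B' m := by
  have htop : B k' = B' k' := by
    apply hH
    have := hcommit.symm.trans hcommit'
    exact Option.some.inj this
  -- downward induction
  have key : ∀ d m, m + d = k' → 1 ≤ m → B m = B' m := by
    intro d
    induction d with
    | zero =>
      intro m hm _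
      have h : m = k' := by omega
      subst h
      exact htop
    | succ n ih =>
      intro m hm hm1
      have hmk' : m + 1 ≤ k' := by omega
      have h1 : 1 < m + 1 := by omega
      have e := ih (m + 1) (by omega) (by omega)
      have l1 := hlinks (m + 1) h1 hmk'
      have l2 := hlinks' (m + 1) h1 hmk'
      simp only [Nat.add_sub_cancel] at l1 l2
      apply hH
      rw [← l1, ← l2, e]
  intro m h1 h2
  exact key (k' - m) m (by omega) h1
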